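/- (Theorem 1, pointwise form.) Let n_j : ℝ → E (j=1,…,N) be differentiable maps with derivatives ṅ_j such that {n_j(t)} is an orthonormal basis of E for every t. Fix t and set b_j = −i⟪ṅ_j(t), n_j(t)⟫; each b_j is a real number. Then for every choice of real numbers θ_1,…,θ_N, Re Tr[H_SA(t)²] = Σ_j ( ‖ṅ_j(t)‖² + (θ_j − b_j)² − b_j² ) ≥ Σ_j ( ‖ṅ_j(t)‖² − b_j² ), with equality if and only if θ_j = b_j for every j. Hence the energy density Tr[H_SA(t)²] of the generalized transitionless Hamiltonian is uniquely minimized by the choice θ_j = −i⟪ṅ_j(t), n_j(t)⟫. -/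

import Mathlib

/-- The rank-one operator `|u⟩⟨v| : z ↦ ⟪v, z⟫ • u`. -/
noncomputable def ketBra {E : Type*} [NormedAddCommGroup E] [InnerProductSpace ℂ E]
    (u v : E) : E →L[ℂ] E :=
  (innerSL ℂ v).smulRight u

/-- The shortcut (transitionless) Hamiltonian
`H_SA(t) = i Σ_j ( |ṅ_j(t)⟩⟨n_j(t)| + i θ_j(t) |n_j(t)⟩⟨n_j(t)| )`. -/
noncomputable def HSA {E : Type*} [NormedAddCommGroup E] [InnerProductSpace ℂ E]
    {N : ℕ} (n n' : Fin N → ℝ → E) (θ : Fin N → ℝ → ℝ) (t : ℝ) : E →L[ℂ] E :=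
  Complex.I • ∑ j : Fin N,
    (ketBra (n' j t) (n j t) + (Complex.I * (θ j t : ℂ)) • ketBra (n j t) (n j t))

/-- Theorem 1, pointwise form: with `b_j = −i⟪ṅ_j(t), n_j(t)⟫` (each a real number), for
every choice of real parameters `θ_j`,
`Re Tr[H_SA(t)²] = Σ_j (‖ṅ_j(t)‖² + (θ_j − b_j)² − b_j²) ≥ Σ_j (‖ṅ_j(t)‖² − b_j²)`,
with equality iff `θ_j = b_j` for all `j`.  Hence the energy density of the generalized
transitionless Hamiltonian is uniquely minimized by `θ_j = −i⟪ṅ_j(t), n_j(t)⟫`. -/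
theorem energy_density_minimized_pointwise
    {E : Type*} [NormedAddCommGroup E] [InnerProductSpace ℂ E] [FiniteDimensional ℂ E]
    {N : ℕ} (n n' : Fin N → ℝ → E)
    (hON : ∀ t : ℝ, Orthonormal ℂ (fun j : Fin N => n j t))
    (hspan : ∀ t : ℝ, Submodule.span ℂ (Set.range (fun j : Fin N => n j t)) = ⊤)
    (hn : ∀ (j : Fin N) (t : ℝ), HasDerivAt (n j) (n' j t) t)
    (t : ℝ) (b : Fin N → ℂ)
    (hb : ∀ j : Fin N, b j = -Complex.I * (inner ℂ (n' j t) (n j t) : ℂ)) :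
    (∀ j : Fin N, (b j).im = 0) ∧
    ∀ θ : Fin N → ℝ,
      ((LinearMap.trace ℂ E
          (((HSA n n' (fun j _ => θ j) t).comp (HSA n n' (fun j _ => θ j) t) : E →L[ℂ] E) :
            E →ₗ[ℂ] E)).re
        = ∑ j : Fin N, (‖n' j t‖ ^ 2 + (θ j - (b j).re) ^ 2 - (b j).re ^ 2)) ∧
      ((LinearMap.trace ℂ E
          (((HSA n n' (fun j _ => θ j) t).comp (HSA n n' (fun j _ => θ j) t) : E →L[ℂ] E) :
            E →ₗ[ℂ] E)).re
        ≥ ∑ j : Fin N, (‖n' j t‖ ^ 2 - (b j).re ^ 2)) ∧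
      (((LinearMap.trace ℂ E
          (((HSA n n' (fun j _ => θ j) t).comp (HSA n n' (fun j _ => θ j) t) : E →L[ℂ] E) :
            E →ₗ[ℂ] E)).re
        = ∑ j : Fin N, (‖n' j t‖ ^ 2 - (b j).re ^ 2)) ↔ ∀ j : Fin N, θ j = (b j).re) := by
  classical
  have hone : ∀ j k : Fin N, (inner ℂ (n j t) (n k t) : ℂ) = if j = k then 1 else 0 :=
    orthonormal_iff_ite.mp (hON t)
  have hskew : ∀ j k : Fin N, (inner ℂ (n' j t) (n k t) : ℂ) = - (inner ℂ (n j t) (n' k t) : ℂ) := by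
    intro j k
    have h1 : HasDerivAt (fun s => (inner ℂ (n j s) (n k s) : ℂ))
        ((inner ℂ (n j t) (n' k t) : ℂ) + (inner ℂ (n' j t) (n k t) : ℂ)) t :=
      (hn j t).inner ℂ (hn k t)
    have h2 : (fun s => (inner ℂ (n j s) (n k s) : ℂ))
        = fun _ => if j = k then (1:ℂ) else 0 := by
      funext s
      exact orthonormal_iff_ite.mp (hON s) j k
    rw [h2] at h1
    have h3 := h1.unique (hasDerivAt_const _ _)
    linear_combination h3
  let B : OrthonormalBasis (Fin N) ℂ E := OrthonormalBasis.mk (hON t) (hspan t).ge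
  have hB : ∀ j, B j = n j t := fun j => by
    simp [B, OrthonormalBasis.coe_mk]
  have htr : ∀ T : E →ₗ[ℂ] E,
      LinearMap.trace ℂ E T = ∑ k : Fin N, (inner ℂ (n k t) (T (n k t)) : ℂ) := by
    intro T
    rw [LinearMap.trace_eq_matrix_trace ℂ B.toBasis T, Matrix.trace]
    refine Finset.sum_congr rfl fun k _ => ?_
    rw [Matrix.diag_apply, LinearMap.toMatrix_apply, OrthonormalBasis.coe_toBasis_repr_apply,
      OrthonormalBasis.repr_apply_apply, OrthonormalBasis.coe_toBasis, hB]
  have happ : ∀ (θ : Fin N → ℝ) (x : E),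
      HSA n n' (fun j _ => θ j) t x
        = Complex.I • ∑ j : Fin N, ((inner ℂ (n j t) x : ℂ) • n' j t
            + (Complex.I * (θ j : ℂ) * (inner ℂ (n j t) x : ℂ)) • n j t) := by
    intro θ x
    simp only [HSA, ketBra, ContinuousLinearMap.smul_apply, ContinuousLinearMap.sum_apply,
      ContinuousLinearMap.add_apply, ContinuousLinearMap.smulRight_apply, innerSL_apply_apply,
      ContinuousLinearMap.coe_smul', Pi.smul_apply, smul_smul]
  have hHe : ∀ (θ : Fin N → ℝ) (k : Fin N),
      HSA n n' (fun j _ => θ j) t (n k t)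
        = Complex.I • (n' k t + (Complex.I * (θ k : ℂ)) • n k t) := by
    intro θ k
    rw [happ]
    congr 1
    rw [Finset.sum_eq_single k]
    · rw [hone]; simp
    · intro j _ hjk; rw [hone]; simp [hjk]
    · intro h; exact absurd (Finset.mem_univ k) h
  have hE : ∀ (θ : Fin N → ℝ) (m k : Fin N),
      (inner ℂ (n m t) (HSA n n' (fun j _ => θ j) t (n k t)) : ℂ)
        = Complex.I * ((inner ℂ (n m t) (n' k t) : ℂ)
            + Complex.I * (θ k : ℂ) * (if m = k then 1 else 0)) := by
    intro θ m k
    rw [hHe, inner_smul_right, inner_add_right, inner_smul_right, hone]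
  have hinner : ∀ (θ : Fin N → ℝ) (m : Fin N) (x : E),
      (inner ℂ (n m t) (HSA n n' (fun j _ => θ j) t x) : ℂ)
        = Complex.I * ((∑ j : Fin N, (inner ℂ (n j t) x : ℂ) * (inner ℂ (n m t) (n' j t) : ℂ))
            + Complex.I * (θ m : ℂ) * (inner ℂ (n m t) x : ℂ)) := by
    intro θ m x
    rw [happ, inner_smul_right, inner_sum]
    simp only [inner_add_right, inner_smul_right, Finset.sum_add_distrib]
    have h5 : (∑ j : Fin N, (Complex.I * (θ j : ℂ) * (inner ℂ (n j t) x : ℂ))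
          * (inner ℂ (n m t) (n j t) : ℂ))
        = Complex.I * (θ m : ℂ) * (inner ℂ (n m t) x : ℂ) := by
      rw [Finset.sum_eq_single m]
      · rw [hone]; simp
      · intro j _ hjm
        rw [hone]
        simp [Ne.symm hjm]
      · intro h; exact absurd (Finset.mem_univ m) h
    rw [h5]
  have hS : ∀ k : Fin N,
      (∑ j : Fin N, (inner ℂ (n j t) (n' k t) : ℂ) * (inner ℂ (n k t) (n' j t) : ℂ))
        = -((‖n' k t‖ : ℂ) ^ 2) := by
    intro k
    have h4 : (∑ j : Fin N, (inner ℂ (n' k t) (n j t) : ℂ) * (inner ℂ (n j t) (n' k t) : ℂ))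
        = (inner ℂ (n' k t) (n' k t) : ℂ) := by
      have := B.sum_inner_mul_inner (n' k t) (n' k t)
      simpa [hB] using this
    have h7 : ∀ j : Fin N, (inner ℂ (n j t) (n' k t) : ℂ) * (inner ℂ (n k t) (n' j t) : ℂ)
        = -((inner ℂ (n' k t) (n j t) : ℂ) * (inner ℂ (n j t) (n' k t) : ℂ)) := by
      intro j
      rw [hskew k j]
      ring
    rw [Finset.sum_congr rfl fun j _ => h7 j, Finset.sum_neg_distrib, h4,
      inner_self_eq_norm_sq_to_K]
    norm_cast
  have hbre0 : ∀ j : Fin N, (inner ℂ (n' j t) (n j t) : ℂ).re = 0 := by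
    intro j
    have h1 : (inner ℂ (n' j t) (n j t) : ℂ)
        = -(starRingEnd ℂ) (inner ℂ (n' j t) (n j t) : ℂ) := by
      conv_lhs => rw [hskew j j]
      rw [inner_conj_symm]
    have h2 := congrArg Complex.re h1
    simp only [Complex.neg_re, Complex.conj_re] at h2
    linarith
  have him : ∀ j : Fin N, (b j).im = 0 := by
    intro j
    rw [hb j]
    simp [Complex.mul_im, hbre0 j]
  have hbC : ∀ j : Fin N, b j = ((b j).re : ℂ) := fun j =>
    Complex.ext (by simp) (by simp [him j])
  have key : ∀ θ : Fin N → ℝ,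
      (LinearMap.trace ℂ E
          (((HSA n n' (fun j _ => θ j) t).comp (HSA n n' (fun j _ => θ j) t) : E →L[ℂ] E) :
            E →ₗ[ℂ] E))
        = ∑ j : Fin N, ((‖n' j t‖ : ℂ) ^ 2 + (θ j : ℂ) ^ 2 - 2 * (θ j : ℂ) * b j) := by
    intro θ
    rw [htr]
    refine Finset.sum_congr rfl fun k _ => ?_
    have hx : ((((HSA n n' (fun j _ => θ j) t).comp (HSA n n' (fun j _ => θ j) t) :
          E →L[ℂ] E) : E →ₗ[ℂ] E)) (n k t)
        = HSA n n' (fun j _ => θ j) t (HSA n n' (fun j _ => θ j) t (n k t)) := rfl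
    rw [hx, hinner θ k (HSA n n' (fun j _ => θ j) t (n k t))]
    simp only [hE]
    have h7 : ∀ j : Fin N, (Complex.I * ((inner ℂ (n j t) (n' k t) : ℂ)
          + Complex.I * (θ k : ℂ) * (if j = k then 1 else 0)))
          * (inner ℂ (n k t) (n' j t) : ℂ)
        = Complex.I * ((inner ℂ (n j t) (n' k t) : ℂ) * (inner ℂ (n k t) (n' j t) : ℂ))
          + (if j = k then Complex.I * Complex.I * (θ k : ℂ) * (inner ℂ (n k t) (n' j t) : ℂ)
             else 0) := by
      intro j; split_ifs <;> ring
    rw [Finset.sum_congr rfl fun j _ => h7 j, Finset.sum_add_distrib, ← Finset.mul_sum, hS k]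
    simp only [Finset.sum_ite_eq', Finset.mem_univ, if_true, eq_self_iff_true]
    linear_combination (2 * (θ k : ℂ)) * hb k - (2 * Complex.I * (θ k : ℂ)) * hskew k k
      + (-((‖n' k t‖ : ℂ) ^ 2) + 2 * Complex.I * (θ k : ℂ) * (inner ℂ (n k t) (n' k t) : ℂ)
        + ((θ k : ℂ)) ^ 2 * (Complex.I ^ 2 - 1)) * Complex.I_sq
  refine ⟨him, fun θ => ?_⟩
  have keyre : (LinearMap.trace ℂ E
        (((HSA n n' (fun j _ => θ j) t).comp (HSA n n' (fun j _ => θ j) t) : E →L[ℂ] E) :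
          E →ₗ[ℂ] E)).re
      = ∑ j : Fin N, (‖n' j t‖ ^ 2 + (θ j - (b j).re) ^ 2 - (b j).re ^ 2) := by
    rw [key θ]
    have hc : (∑ j : Fin N, ((‖n' j t‖ : ℂ) ^ 2 + (θ j : ℂ) ^ 2 - 2 * (θ j : ℂ) * b j))
        = ((∑ j : Fin N, (‖n' j t‖ ^ 2 + (θ j - (b j).re) ^ 2 - (b j).re ^ 2) : ℝ) : ℂ) := by
      push_cast
      refine Finset.sum_congr rfl fun j _ => ?_
      rw [hbC j]
      simp only [Complex.ofReal_re]
      ring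
    rw [hc, Complex.ofReal_re]
  refine ⟨keyre, ?_, ?_⟩
  · rw [keyre]
    refine Finset.sum_le_sum fun j _ => ?_
    nlinarith [sq_nonneg (θ j - (b j).re)]
  · rw [keyre]
    constructor
    · intro h
      have h8 : ∑ j : Fin N, (θ j - (b j).re) ^ 2 = 0 := by
        calc ∑ j : Fin N, (θ j - (b j).re) ^ 2
            = ∑ j : Fin N, ((‖n' j t‖ ^ 2 + (θ j - (b j).re) ^ 2 - (b j).re ^ 2)
              - (‖n' j t‖ ^ 2 - (b j).re ^ 2)) := by
              refine Finset.sum_congr rfl fun j _ => ?_; ring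
          _ = 0 := by rw [Finset.sum_sub_distrib, h, sub_self]
      intro j
      have h9 := (Finset.sum_eq_zero_iff_of_nonneg
        (fun j _ => sq_nonneg (θ j - (b j).re))).mp h8 j (Finset.mem_univ j)
      have := pow_eq_zero_iff (n := 2) (by norm_num) |>.mp h9
      linarith [sub_eq_zero.mp this]
    · intro h
      refine Finset.sum_congr rfl fun j _ => ?_
      rw [h j]
      ring
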